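/- Let (Z, X) be distributed as a discrete hidden Markov model on K^p × 𝒳^p (K, 𝒳 finite, p ≥ 1): P(Z = z, X = x) = q_1(z_1) · ∏_{j=2}^p Q_j(z_j | z_{j-1}) · ∏_{j=1}^p f_j(x_j | z_j). Fix x ∈ 𝒳^p with P(X = x) > 0 and define α_j(k) = P(X_1 = x_1, …, X_j = x_j, Z_j = k). Then for every z ∈ K^p, the conditional distribution of the full latent path factorizes as P(Z = z | X = x) = [α_p(z_p) / Σ_{k ∈ K} α_p(k)] · ∏_{j=1}^{p−1} [Q_{j+1}(z_{j+1} | z_j) · α_j(z_j) / Σ_{k ∈ K} Q_{j+1}(z_{j+1} | k) · α_j(k)] (with the convention that any factor whose denominator is zero does not occur, since in that case both sides equal zero); consequently, the forward-backward sampling algorithm, which samples z_p from α_p(·)/Σ_k α_p(k) and then, for j = p−1 down to 1, samples z_j from Q_{j+1}(z_{j+1} | ·) α_j(·) / Σ_k Q_{j+1}(z_{j+1} | k) α_j(k), produces an exact sample from the conditional distribution of Z given X = x. -/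

import Mathlib

open Finset

section helpers
variable {ι K : Type*} [Fintype ι] [DecidableEq ι] [Fintype K] [DecidableEq K]

lemma hmm_extract (a : ι) (c : ι → Prop) [DecidablePred c] (v : ι → ℝ) (hc : ¬ c a) :
    (∏ i : ι, (if c i ∨ i = a then v i else 1))
      = v a * ∏ i : ι, (if c i then v i else 1) := by
  have h : ∀ i : ι, (if c i ∨ i = a then v i else 1)
      = (if i = a then v i else 1) * (if c i then v i else 1) := by
    intro i
    by_cases h1 : i = a
    · subst h1; simp [hc]
    · by_cases h2 : c i <;> simp [h1, h2]
  rw [Finset.prod_congr rfl (fun i _ => h i), Finset.prod_mul_distrib,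
    Finset.prod_ite_eq' Finset.univ a v]
  simp

lemma hmm_swappin (c : ι) (k k₀ : K) (w : (ι → K) → ℝ)
    (hw : ∀ z a, w (Function.update z c a) = w z)
    (P : (ι → K) → Prop) [DecidablePred P]
    (hP : ∀ z a, P (Function.update z c a) ↔ P z) :
    (∑ z : ι → K, if z c = k ∧ P z then w z else 0)
      = ∑ z : ι → K, if z c = k₀ ∧ P z then w z else 0 := by
  have hinv : Function.Involutive
      (fun z : ι → K => Function.update z c (Equiv.swap k k₀ (z c))) := by
    intro z
    funext i
    by_cases hi : i = c
    · subst hi; simp [Function.update_self, Equiv.swap_apply_self]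
    · simp [Function.update_of_ne hi]
  set e : Equiv.Perm (ι → K) := Function.Involutive.toPerm _ hinv with he
  refine Fintype.sum_equiv e _ _ ?_
  intro z
  have hez : e z = Function.update z c (Equiv.swap k k₀ (z c)) := rfl
  have hc : (e z) c = Equiv.swap k k₀ (z c) := by
    rw [hez]; simp [Function.update_self]
  have hwz : w (e z) = w z := by rw [hez, hw]
  have hPz : P (e z) ↔ P z := by rw [hez, hP]
  by_cases h1 : z c = k
  · have : (e z) c = k₀ := by rw [hc, h1, Equiv.swap_apply_left]
    simp [h1, this, hwz.symm, hPz]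
  · have h2 : (e z) c ≠ k₀ := by
      rw [hc]
      intro hcontra
      apply h1
      have := (Equiv.swap k k₀).injective (a₁ := z c) (a₂ := k)
      exact this (by rw [hcontra, Equiv.swap_apply_left])
    simp [h1, h2]

lemma hmm_sumout (c : ι) (k₀ : K) (w : (ι → K) → ℝ)
    (hw : ∀ z a, w (Function.update z c a) = w z)
    (h : K → (ι → K) → ℝ)
    (hh : ∀ k z a, h k (Function.update z c a) = h k z)
    (hsum : ∀ z : ι → K, ∑ k : K, h k z = 1)
    (P : (ι → K) → Prop) [DecidablePred P]
    (hP : ∀ z a, P (Function.update z c a) ↔ P z) :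
    (∑ z : ι → K, if P z then w z * h (z c) z else 0)
      = ∑ z : ι → K, if z c = k₀ ∧ P z then w z else 0 := by
  have step1 : ∀ z : ι → K, (if P z then w z * h (z c) z else 0)
      = ∑ k : K, (if z c = k ∧ P z then w z * h k z else 0) := by
    intro z
    by_cases hPz : P z
    · simp only [hPz, and_true, if_true]
      rw [Finset.sum_ite_eq Finset.univ (z c) (fun k => w z * h k z)]
      simp
    · simp [hPz]
  rw [Finset.sum_congr rfl (fun z _ => step1 z), Finset.sum_comm]
  have step2 : ∀ k : K, (∑ z : ι → K, if z c = k ∧ P z then w z * h k z else 0)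
      = ∑ z : ι → K, if z c = k₀ ∧ P z then w z * h k z else 0 := by
    intro k
    exact hmm_swappin c k k₀ (fun z => w z * h k z)
      (fun z a => by
        show w (Function.update z c a) * h k (Function.update z c a) = w z * h k z
        rw [hw, hh]) P hP
  rw [Finset.sum_congr rfl (fun k _ => step2 k), Finset.sum_comm]
  refine Finset.sum_congr rfl (fun z _ => ?_)
  by_cases hz : z c = k₀ ∧ P z
  · simp [hz.1, hz.2, ← Finset.mul_sum, hsum z]
  · simp [hz]

end helpers

section cutsec2
variable {K : Type*} [Fintype K] [DecidableEq K]

lemma hmm_lemX {𝒳 K : Type*} [Fintype 𝒳] [DecidableEq 𝒳] {p : ℕ}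
    (f : Fin p → 𝒳 → K → ℝ) (hf_sum : ∀ j k, ∑ a : 𝒳, f j a k = 1)
    (x : Fin p → 𝒳) (z : Fin p → K) (j : Fin p) :
    (∑ x' : Fin p → 𝒳, if (∀ i : Fin p, i ≤ j → x' i = x i)
        then ∏ i : Fin p, f i (x' i) (z i) else 0)
      = ∏ i : Fin p, (if i ≤ j then f i (x i) (z i) else 1) := by
  classical
  set g : Fin p → 𝒳 → ℝ :=
    fun i a => if i ≤ j then (if a = x i then f i a (z i) else 0) else f i a (z i) with hg
  have h1 : ∀ x' : Fin p → 𝒳, (if (∀ i : Fin p, i ≤ j → x' i = x i)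
      then ∏ i : Fin p, f i (x' i) (z i) else 0) = ∏ i : Fin p, g i (x' i) := by
    intro x'
    by_cases hc : ∀ i : Fin p, i ≤ j → x' i = x i
    · rw [if_pos hc]
      refine Finset.prod_congr rfl (fun i _ => ?_)
      by_cases hij : i ≤ j
      · simp [hg, hij, hc i hij]
      · simp [hg, hij]
    · rw [if_neg hc]
      push_neg at hc
      obtain ⟨i₀, hi₀, hne⟩ := hc
      refine (Finset.prod_eq_zero (Finset.mem_univ i₀) ?_).symm
      simp [hg, hi₀, hne]
  rw [Finset.sum_congr rfl (fun x' _ => h1 x')]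
  have h2 := (Finset.prod_univ_sum (fun _ : Fin p => (Finset.univ : Finset 𝒳)) g).symm
  rw [Fintype.piFinset_univ] at h2
  rw [h2]
  refine Finset.prod_congr rfl (fun i _ => ?_)
  by_cases hij : i ≤ j
  · simp only [hg, hij, if_true]
    rw [Finset.sum_ite_eq' Finset.univ (x i) (fun a => f i a (z i))]
    simp
  · simp only [hg, hij, if_false]
    exact hf_sum i (z i)


lemma hmm_cut {n : ℕ} (Q : Fin (n + 1) → K → K → ℝ)
    (hQ_sum : ∀ j l, ∑ k : K, Q j k l = 1) (k₀ : K)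
    (F : (Fin (n + 1) → K) → ℝ) (b : ℕ) (hb : 1 ≤ b)
    (hF : ∀ (z : Fin (n + 1) → K) (c : Fin (n + 1)) (a : K), b ≤ c.val →
      F (Function.update z c a) = F z) :
    ∀ j', b ≤ j' → j' ≤ n + 1 →
    (∑ z : Fin (n + 1) → K, if (∀ i : Fin (n + 1), j' ≤ i.val → z i = k₀)
        then (∏ i : Fin n, if i.val + 1 < j'
            then Q ⟨i.val + 1, by omega⟩ (z ⟨i.val + 1, by omega⟩) (z ⟨i.val, by omega⟩)
            else 1) * F z else 0)
      = ∑ z : Fin (n + 1) → K, if (∀ i : Fin (n + 1), b ≤ i.val → z i = k₀)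
        then (∏ i : Fin n, if i.val + 1 < b
            then Q ⟨i.val + 1, by omega⟩ (z ⟨i.val + 1, by omega⟩) (z ⟨i.val, by omega⟩)
            else 1) * F z else 0 := by
  classical
  intro j' hbj'
  induction j', hbj' using Nat.le_induction with
  | base => intro _; rfl
  | succ m hbm ih =>
  intro hm1
  obtain ⟨m', rfl⟩ : ∃ t, m = t + 1 := ⟨m - 1, by omega⟩
  have hm'n : m' < n := by omega
  have hm'n1 : m' < n + 1 := by omega
  have hm'1n1 : m' + 1 < n + 1 := by omega
  set c : Fin (n + 1) := ⟨m' + 1, hm'1n1⟩ with hcdef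
  have hne : ∀ (z : Fin (n + 1) → K) (a : K) (r : ℕ) (hr : r < n + 1), r ≠ m' + 1 →
      Function.update z c a ⟨r, hr⟩ = z ⟨r, hr⟩ := by
    intro z a r hr hrm
    refine Function.update_of_ne ?_ a z
    simp only [hcdef, ne_eq, Fin.mk.injEq]
    exact hrm
  -- extraction of the Q factor at index m'
  have hprod : ∀ z : Fin (n + 1) → K,
      (∏ i : Fin n, if i.val + 1 < m' + 1 + 1
          then Q ⟨i.val + 1, by omega⟩ (z ⟨i.val + 1, by omega⟩) (z ⟨i.val, by omega⟩)
          else 1)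
      = Q ⟨m' + 1, hm'1n1⟩ (z ⟨m' + 1, hm'1n1⟩) (z ⟨m', hm'n1⟩) *
        (∏ i : Fin n, if i.val + 1 < m' + 1
          then Q ⟨i.val + 1, by omega⟩ (z ⟨i.val + 1, by omega⟩) (z ⟨i.val, by omega⟩)
          else 1) := by
    intro z
    have hcond : ∀ i : Fin n, (i.val + 1 < m' + 1 + 1) ↔ ((i.val + 1 < m' + 1) ∨ i = ⟨m', hm'n⟩) := by
      intro i
      rw [Fin.ext_iff]
      show _ ↔ _ ∨ i.val = m'
      omega
    rw [Finset.prod_congr rfl (fun i _ => if_congr (hcond i) rfl rfl)]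
    exact hmm_extract (⟨m', hm'n⟩ : Fin n) (fun i : Fin n => i.val + 1 < m' + 1)
      (fun i => Q ⟨i.val + 1, by omega⟩ (z ⟨i.val + 1, by omega⟩) (z ⟨i.val, by omega⟩))
      (by simp)
  -- invariance facts
  have hw : ∀ (z : Fin (n + 1) → K) (a : K),
      ((∏ i : Fin n, if i.val + 1 < m' + 1
          then Q ⟨i.val + 1, by omega⟩ (Function.update z c a ⟨i.val + 1, by omega⟩)
            (Function.update z c a ⟨i.val, by omega⟩)
          else 1) * F (Function.update z c a))
      = (∏ i : Fin n, if i.val + 1 < m' + 1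
          then Q ⟨i.val + 1, by omega⟩ (z ⟨i.val + 1, by omega⟩) (z ⟨i.val, by omega⟩)
          else 1) * F z := by
    intro z a
    rw [hF z c a (by simpa [hcdef] using by omega : b ≤ c.val)]
    congr 1
    refine Finset.prod_congr rfl (fun i _ => ?_)
    by_cases hi : i.val + 1 < m' + 1
    · rw [if_pos hi, if_pos hi, hne z a (i.val + 1) (by omega) (by omega),
        hne z a i.val (by omega) (by omega)]
    · rw [if_neg hi, if_neg hi]
  have hP : ∀ (z : Fin (n + 1) → K) (a : K),
      (∀ i : Fin (n + 1), m' + 1 + 1 ≤ i.val → Function.update z c a i = k₀)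
        ↔ (∀ i : Fin (n + 1), m' + 1 + 1 ≤ i.val → z i = k₀) := by
    intro z a
    constructor
    · intro h i hi
      have := h i hi
      rwa [show (i : Fin (n+1)) = ⟨i.val, i.isLt⟩ from rfl,
        hne z a i.val i.isLt (by omega)] at this
    · intro h i hi
      rw [show (i : Fin (n+1)) = ⟨i.val, i.isLt⟩ from rfl,
        hne z a i.val i.isLt (by omega)]
      exact h i hi
  -- main chain
  calc
    (∑ z : Fin (n + 1) → K, if (∀ i : Fin (n + 1), m' + 1 + 1 ≤ i.val → z i = k₀)
        then (∏ i : Fin n, if i.val + 1 < m' + 1 + 1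
            then Q ⟨i.val + 1, by omega⟩ (z ⟨i.val + 1, by omega⟩) (z ⟨i.val, by omega⟩)
            else 1) * F z else 0)
      = ∑ z : Fin (n + 1) → K, if (∀ i : Fin (n + 1), m' + 1 + 1 ≤ i.val → z i = k₀)
          then ((∏ i : Fin n, if i.val + 1 < m' + 1
            then Q ⟨i.val + 1, by omega⟩ (z ⟨i.val + 1, by omega⟩) (z ⟨i.val, by omega⟩)
            else 1) * F z) * Q ⟨m' + 1, hm'1n1⟩ (z c) (z ⟨m', hm'n1⟩) else 0 := by
        refine Finset.sum_congr rfl (fun z _ => ?_)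
        refine if_congr Iff.rfl ?_ rfl
        rw [hprod z]
        show Q ⟨m' + 1, hm'1n1⟩ (z c) (z ⟨m', hm'n1⟩) * _ * _ = _
        ring
    _ = ∑ z : Fin (n + 1) → K, if z c = k₀ ∧ (∀ i : Fin (n + 1), m' + 1 + 1 ≤ i.val → z i = k₀)
          then (∏ i : Fin n, if i.val + 1 < m' + 1
            then Q ⟨i.val + 1, by omega⟩ (z ⟨i.val + 1, by omega⟩) (z ⟨i.val, by omega⟩)
            else 1) * F z else 0 := by
        exact hmm_sumout c k₀
          (fun z => (∏ i : Fin n, if i.val + 1 < m' + 1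
            then Q ⟨i.val + 1, by omega⟩ (z ⟨i.val + 1, by omega⟩) (z ⟨i.val, by omega⟩)
            else 1) * F z)
          (fun z a => hw z a)
          (fun k z => Q ⟨m' + 1, hm'1n1⟩ k (z ⟨m', hm'n1⟩))
          (fun k z a => by
            show Q _ k (Function.update z c a ⟨m', hm'n1⟩) = _
            rw [hne z a m' hm'n1 (by omega)])
          (fun z => hQ_sum ⟨m' + 1, hm'1n1⟩ (z ⟨m', hm'n1⟩))
          (fun z => ∀ i : Fin (n + 1), m' + 1 + 1 ≤ i.val → z i = k₀)
          (fun z a => hP z a)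
    _ = ∑ z : Fin (n + 1) → K, if (∀ i : Fin (n + 1), m' + 1 ≤ i.val → z i = k₀)
          then (∏ i : Fin n, if i.val + 1 < m' + 1
            then Q ⟨i.val + 1, by omega⟩ (z ⟨i.val + 1, by omega⟩) (z ⟨i.val, by omega⟩)
            else 1) * F z else 0 := by
        refine Finset.sum_congr rfl (fun z _ => if_congr ?_ rfl rfl)
        constructor
        · rintro ⟨h1, h2⟩ i hi
          by_cases him : i.val = m' + 1
          · rwa [show i = c from Fin.ext him]
          · exact h2 i (by omega)
        · intro h
          exact ⟨h c (by simp [hcdef]), fun i hi => h i (by omega)⟩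
    _ = _ := ih (by omega)

end cutsec2



/-- **Correctness of forward-backward sampling.**
For a discrete hidden Markov model with `P(X = x) > 0`, the conditional
distribution of the full latent path factorizes as
`P(Z = z | X = x) = [α_p(z_p) / ∑ k, α_p(k)]
  * ∏_{j=1}^{p-1} [Q_{j+1}(z_{j+1} | z_j) α_j(z_j) / ∑ k, Q_{j+1}(z_{j+1} | k) α_j(k)]`,
where `α_j(k) = P(X_{1:j} = x_{1:j}, Z_j = k)` (division by zero is interpreted
as zero, in which case both sides vanish).  Consequently, the forward-backward
sampling algorithm produces an exact sample from the conditional law of `Z`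
given `X = x`. -/
theorem hmm_forward_backward_sampling_correct
    {K 𝒳 : Type*} [Fintype K] [Fintype 𝒳] [DecidableEq K] [DecidableEq 𝒳]
    (p : ℕ) (hp : 1 ≤ p)
    (q1 : K → ℝ) (Q : Fin p → K → K → ℝ) (f : Fin p → 𝒳 → K → ℝ)
    (hq1_nonneg : ∀ k, 0 ≤ q1 k) (hq1_sum : ∑ k : K, q1 k = 1)
    (hQ_nonneg : ∀ j k l, 0 ≤ Q j k l) (hQ_sum : ∀ j l, ∑ k : K, Q j k l = 1)
    (hf_nonneg : ∀ j a k, 0 ≤ f j a k) (hf_sum : ∀ j k, ∑ a : 𝒳, f j a k = 1)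
    (μ : (Fin p → K) → (Fin p → 𝒳) → ℝ)
    (hμ : ∀ z x, μ z x =
      q1 (z ⟨0, by omega⟩) *
      (∏ i : Fin (p - 1),
        Q ⟨i.val + 1, by have := i.isLt; omega⟩
          (z ⟨i.val + 1, by have := i.isLt; omega⟩)
          (z ⟨i.val, by have := i.isLt; omega⟩)) *
      ∏ j : Fin p, f j (x j) (z j))
    (x : Fin p → 𝒳)
    (hx : 0 < ∑ z : Fin p → K, μ z x)
    (α : Fin p → K → ℝ)
    (hα : ∀ (j : Fin p) (k : K), α j k =
      ∑ z : Fin p → K, ∑ x' : Fin p → 𝒳,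
        if z j = k ∧ (∀ i : Fin p, i ≤ j → x' i = x i) then μ z x' else 0) :
    ∀ z : Fin p → K,
      -- `P(Z = z | X = x)`
      μ z x / (∑ z' : Fin p → K, μ z' x)
      = (α ⟨p - 1, by omega⟩ (z ⟨p - 1, by omega⟩) /
            ∑ k : K, α ⟨p - 1, by omega⟩ k) *
        ∏ i : Fin (p - 1),
          (Q ⟨i.val + 1, by have := i.isLt; omega⟩
              (z ⟨i.val + 1, by have := i.isLt; omega⟩)
              (z ⟨i.val, by have := i.isLt; omega⟩) *
            α ⟨i.val, by have := i.isLt; omega⟩ (z ⟨i.val, by have := i.isLt; omega⟩)) /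
          (∑ k : K,
            Q ⟨i.val + 1, by have := i.isLt; omega⟩
                (z ⟨i.val + 1, by have := i.isLt; omega⟩) k *
              α ⟨i.val, by have := i.isLt; omega⟩ k) := by
  classical
  obtain ⟨n, rfl⟩ : ∃ n, p = n + 1 := ⟨p - 1, by omega⟩
  have hμ' : ∀ (z : Fin (n+1) → K) (x' : Fin (n+1) → 𝒳), μ z x' =
      q1 (z ⟨0, by omega⟩) *
      (∏ i : Fin n, Q ⟨i.val + 1, by omega⟩ (z ⟨i.val + 1, by omega⟩) (z ⟨i.val, by omega⟩)) *
      ∏ j : Fin (n+1), f j (x' j) (z j) := hμ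
  clear hμ
  intro z
  show μ z x / (∑ z' : Fin (n+1) → K, μ z' x)
      = (α ⟨n, by omega⟩ (z ⟨n, by omega⟩) / ∑ k : K, α ⟨n, by omega⟩ k) *
        ∏ i : Fin n,
          (Q ⟨i.val + 1, by omega⟩ (z ⟨i.val + 1, by omega⟩) (z ⟨i.val, by omega⟩) *
            α ⟨i.val, by omega⟩ (z ⟨i.val, by omega⟩)) /
          (∑ k : K, Q ⟨i.val + 1, by omega⟩ (z ⟨i.val + 1, by omega⟩) k * α ⟨i.val, by omega⟩ k)
  rcases isEmpty_or_nonempty K with hK | hK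
  · exfalso
    rw [Finset.univ_eq_empty, Finset.sum_empty] at hx
    exact lt_irrefl 0 hx
  obtain ⟨k₀⟩ := hK
  -- nonnegativity
  have hμ_nonneg : ∀ (z' : Fin (n+1) → K) (x'' : Fin (n+1) → 𝒳), 0 ≤ μ z' x'' := by
    intro z' x''
    rw [hμ']
    refine mul_nonneg (mul_nonneg (hq1_nonneg _) (Finset.prod_nonneg fun i _ => hQ_nonneg _ _ _))
      (Finset.prod_nonneg fun i _ => hf_nonneg _ _ _)
  have hα_nonneg : ∀ (j : Fin (n+1)) (k : K), 0 ≤ α j k := by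
    intro j k
    rw [hα]
    refine Finset.sum_nonneg fun z' _ => Finset.sum_nonneg fun x' _ => ?_
    by_cases h : z' j = k ∧ (∀ i : Fin (n+1), i ≤ j → x' i = x i)
    · rw [if_pos h]; exact hμ_nonneg _ _
    · rw [if_neg h]
  -- α in path-sum form
  have αform : ∀ (j : Fin (n+1)) (k : K), α j k =
      ∑ z' : Fin (n+1) → K,
        if z' j = k then (q1 (z' ⟨0, by omega⟩) *
          ∏ i : Fin n, Q ⟨i.val + 1, by omega⟩ (z' ⟨i.val + 1, by omega⟩) (z' ⟨i.val, by omega⟩)) *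
          (∏ i : Fin (n+1), if i ≤ j then f i (x i) (z' i) else 1) else 0 := by
    intro j k
    rw [hα j k]
    refine Finset.sum_congr rfl (fun z' _ => ?_)
    by_cases hz : z' j = k
    · simp only [hz, true_and, if_pos rfl]
      have : ∀ x' : Fin (n+1) → 𝒳,
          (if (∀ i : Fin (n+1), i ≤ j → x' i = x i) then μ z' x' else 0)
          = (q1 (z' ⟨0, by omega⟩) *
              ∏ i : Fin n, Q ⟨i.val + 1, by omega⟩ (z' ⟨i.val + 1, by omega⟩) (z' ⟨i.val, by omega⟩)) *
            (if (∀ i : Fin (n+1), i ≤ j → x' i = x i) then ∏ i : Fin (n+1), f i (x' i) (z' i) else 0) := by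
        intro x'
        by_cases hc : ∀ i : Fin (n+1), i ≤ j → x' i = x i
        · rw [if_pos hc, if_pos hc, hμ']
        · rw [if_neg hc, if_neg hc, mul_zero]
      rw [Finset.sum_congr rfl (fun x' _ => this x'), ← Finset.mul_sum,
        hmm_lemX f hf_sum x z' j, if_true]
    · simp only [hz, false_and, if_false, if_neg hz]
      exact Finset.sum_const_zero
  -- sum of last alphas is the total mass
  have F1 : (∑ k : K, α ⟨n, by omega⟩ k) = ∑ z' : Fin (n+1) → K, μ z' x := by
    rw [Finset.sum_congr rfl (fun k _ => αform ⟨n, by omega⟩ k), Finset.sum_comm]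
    refine Finset.sum_congr rfl (fun z' _ => ?_)
    rw [Finset.sum_ite_eq Finset.univ (z' ⟨n, by omega⟩), if_pos (Finset.mem_univ _), hμ']
    congr 1
    refine Finset.prod_congr rfl (fun i _ => ?_)
    rw [if_pos]
    show i.val ≤ n
    have := i.isLt
    omega
  -- base case of the forward recursion
  have F0 : ∀ k : K, α ⟨0, by omega⟩ k = q1 k * f ⟨0, by omega⟩ (x ⟨0, by omega⟩) k := by
    intro k
    set z₀ : Fin (n+1) → K := fun i => if i.val = 0 then k else k₀ with hz₀
    have hF0aux : ∀ (z' : Fin (n+1) → K) (c : Fin (n+1)) (a : K), 1 ≤ c.val →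
        (if Function.update z' c a ⟨0, by omega⟩ = k
          then q1 k * f ⟨0, by omega⟩ (x ⟨0, by omega⟩) k else 0)
        = (if z' ⟨0, by omega⟩ = k then q1 k * f ⟨0, by omega⟩ (x ⟨0, by omega⟩) k else 0) := by
      intro z' c a hc
      have hne0 : (⟨0, by omega⟩ : Fin (n+1)) ≠ c := fun hEq => by
        have h0 : (0 : ℕ) = c.val := congrArg Fin.val hEq
        omega
      rw [Function.update_of_ne hne0 a z']
    have reshape : ∀ z' : Fin (n+1) → K,
        (if z' ⟨0, by omega⟩ = k then (q1 (z' ⟨0, by omega⟩) *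
          ∏ i : Fin n, Q ⟨i.val + 1, by omega⟩ (z' ⟨i.val + 1, by omega⟩) (z' ⟨i.val, by omega⟩)) *
          (∏ i : Fin (n+1), if i ≤ (⟨0, by omega⟩ : Fin (n+1)) then f i (x i) (z' i) else 1) else 0)
        = (if (∀ i : Fin (n+1), n + 1 ≤ i.val → z' i = k₀) then
            (∏ i : Fin n, if i.val + 1 < n + 1
              then Q ⟨i.val + 1, by omega⟩ (z' ⟨i.val + 1, by omega⟩) (z' ⟨i.val, by omega⟩) else 1) *
            (if z' ⟨0, by omega⟩ = k then q1 k * f ⟨0, by omega⟩ (x ⟨0, by omega⟩) k else 0) else 0) := by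
      intro z'
      rw [if_pos (fun (i : Fin (n+1)) hi => absurd hi (by have := i.isLt; omega))]
      rw [Finset.prod_congr rfl (fun (i : Fin n) _ =>
        if_pos (show i.val + 1 < n + 1 from by have := i.isLt; omega))]
      by_cases hz : z' ⟨0, by omega⟩ = k
      · rw [if_pos hz, if_pos hz]
        have hf0 : (∏ i : Fin (n+1), if i ≤ (⟨0, by omega⟩ : Fin (n+1)) then f i (x i) (z' i) else 1)
            = f ⟨0, by omega⟩ (x ⟨0, by omega⟩) (z' ⟨0, by omega⟩) := by
          rw [Finset.prod_congr rfl (fun (i : Fin (n+1)) _ => if_congr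
            (show (i ≤ (⟨0, by omega⟩ : Fin (n+1))) ↔ i = ⟨0, by omega⟩ from
              ⟨fun h => Fin.ext (Nat.le_zero.mp h), fun h => le_of_eq h⟩) rfl rfl),
            Finset.prod_ite_eq' Finset.univ ((⟨0, by omega⟩ : Fin (n+1)))
              (fun i => f i (x i) (z' i)), if_pos (Finset.mem_univ _)]
        rw [hf0, hz]; ring
      · rw [if_neg hz, if_neg hz, mul_zero]
    have eval : ∀ z' : Fin (n+1) → K,
        (if (∀ i : Fin (n+1), 1 ≤ i.val → z' i = k₀) then
          (∏ i : Fin n, if i.val + 1 < 1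
            then Q ⟨i.val + 1, by omega⟩ (z' ⟨i.val + 1, by omega⟩) (z' ⟨i.val, by omega⟩) else 1) *
          (if z' ⟨0, by omega⟩ = k then q1 k * f ⟨0, by omega⟩ (x ⟨0, by omega⟩) k else 0) else 0)
        = (if z' = z₀ then q1 k * f ⟨0, by omega⟩ (x ⟨0, by omega⟩) k else 0) := by
      intro z'
      rw [Finset.prod_eq_one (fun (i : Fin n) _ => if_neg (by omega)), one_mul]
      by_cases hz' : z' = z₀
      · rw [if_pos hz', hz']
        rw [if_pos (fun (i : Fin (n+1)) hi => by
          show (if i.val = 0 then k else k₀) = k₀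
          rw [if_neg (by omega)])]
        rw [if_pos (show z₀ ⟨0, by omega⟩ = k from by simp [hz₀])]
      · rw [if_neg hz']
        by_cases hpin : ∀ i : Fin (n+1), 1 ≤ i.val → z' i = k₀
        · rw [if_pos hpin]
          by_cases hzk : z' ⟨0, by omega⟩ = k
          · exfalso
            apply hz'
            funext i
            by_cases hi : i.val = 0
            · have hieq : i = ⟨0, by omega⟩ := Fin.ext hi
              rw [hieq, hzk]
              simp [hz₀]
            · rw [hpin i (by omega)]
              show k₀ = (if i.val = 0 then k else k₀); rw [if_neg hi]
          · rw [if_neg hzk]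
        · rw [if_neg hpin]
    calc α ⟨0, by omega⟩ k
        = ∑ z' : Fin (n+1) → K,
          (if (∀ i : Fin (n+1), n + 1 ≤ i.val → z' i = k₀) then
            (∏ i : Fin n, if i.val + 1 < n + 1
              then Q ⟨i.val + 1, by omega⟩ (z' ⟨i.val + 1, by omega⟩) (z' ⟨i.val, by omega⟩) else 1) *
            (if z' ⟨0, by omega⟩ = k then q1 k * f ⟨0, by omega⟩ (x ⟨0, by omega⟩) k else 0) else 0) := by
          rw [αform ⟨0, by omega⟩ k]
          exact Finset.sum_congr rfl (fun z' _ => reshape z')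
      _ = ∑ z' : Fin (n+1) → K,
          (if (∀ i : Fin (n+1), 1 ≤ i.val → z' i = k₀) then
            (∏ i : Fin n, if i.val + 1 < 1
              then Q ⟨i.val + 1, by omega⟩ (z' ⟨i.val + 1, by omega⟩) (z' ⟨i.val, by omega⟩) else 1) *
            (if z' ⟨0, by omega⟩ = k then q1 k * f ⟨0, by omega⟩ (x ⟨0, by omega⟩) k else 0) else 0) :=
          hmm_cut Q hQ_sum k₀
            (fun z' => if z' ⟨0, by omega⟩ = k then q1 k * f ⟨0, by omega⟩ (x ⟨0, by omega⟩) k else 0)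
            1 le_rfl (fun z' c a hc => hF0aux z' c a hc) (n + 1) (by omega) (le_refl _)
      _ = ∑ z' : Fin (n+1) → K, (if z' = z₀ then q1 k * f ⟨0, by omega⟩ (x ⟨0, by omega⟩) k else 0) :=
          Finset.sum_congr rfl (fun z' _ => eval z')
      _ = q1 k * f ⟨0, by omega⟩ (x ⟨0, by omega⟩) k := by
          rw [Finset.sum_ite_eq' Finset.univ z₀
            (fun _ => q1 k * f ⟨0, by omega⟩ (x ⟨0, by omega⟩) k), if_pos (Finset.mem_univ _)]
  -- forward recursion
  have F2 : ∀ (i : Fin n),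
      α ⟨i.val + 1, by omega⟩ (z ⟨i.val + 1, by omega⟩)
        = f ⟨i.val + 1, by omega⟩ (x ⟨i.val + 1, by omega⟩) (z ⟨i.val + 1, by omega⟩) *
          ∑ k : K, Q ⟨i.val + 1, by omega⟩ (z ⟨i.val + 1, by omega⟩) k * α ⟨i.val, by omega⟩ k := by
    intro i
    set m : K := z ⟨i.val + 1, by omega⟩ with hm
    -- coordinate-update helper
    have hupd : ∀ (z' : Fin (n+1) → K) (c : Fin (n+1)) (a : K) (r : ℕ) (hr : r < n + 1),
        r ≠ c.val → Function.update z' c a ⟨r, hr⟩ = z' ⟨r, hr⟩ := by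
      intro z' c a r hr hrc
      refine Function.update_of_ne ?_ a z'
      intro hEq
      exact hrc (congrArg Fin.val hEq)
    -- the f-product over indices ≤ j
    -- step 1 : extract the f-factor at j+1
    have hf_extract : ∀ z' : Fin (n+1) → K,
        (∏ i' : Fin (n+1), if i' ≤ (⟨i.val + 1, by omega⟩ : Fin (n+1)) then f i' (x i') (z' i') else 1)
        = f ⟨i.val + 1, by omega⟩ (x ⟨i.val + 1, by omega⟩) (z' ⟨i.val + 1, by omega⟩) *
          ∏ i' : Fin (n+1), if i' ≤ (⟨i.val, by omega⟩ : Fin (n+1)) then f i' (x i') (z' i') else 1 := by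
      intro z'
      have hcond : ∀ i' : Fin (n+1), (i' ≤ (⟨i.val + 1, by omega⟩ : Fin (n+1)))
          ↔ ((i' ≤ (⟨i.val, by omega⟩ : Fin (n+1))) ∨ i' = ⟨i.val + 1, by omega⟩) := by
        intro i'
        constructor
        · intro h
          have h' : i'.val ≤ i.val + 1 := h
          rcases Nat.lt_or_ge i'.val (i.val + 1) with hlt | hge
          · exact Or.inl (show i'.val ≤ i.val from Nat.lt_succ_iff.mp hlt)
          · exact Or.inr (Fin.ext (Nat.le_antisymm h' hge))
        · rintro (h | rfl)
          · exact le_trans h (show ((⟨i.val, by omega⟩ : Fin (n+1)) ≤ ⟨i.val + 1, by omega⟩)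
              from Nat.le_succ _)
          · exact le_refl _
      rw [Finset.prod_congr rfl (fun i' _ => if_congr (hcond i') rfl rfl)]
      exact hmm_extract (⟨i.val + 1, by omega⟩ : Fin (n+1))
        (fun i' : Fin (n+1) => i' ≤ (⟨i.val, by omega⟩ : Fin (n+1)))
        (fun i' => f i' (x i') (z' i'))
        (fun h => Nat.not_succ_le_self i.val h)
    -- extraction of the Q factor at index j from products cut at j+2
    have hQ_extract : ∀ z' : Fin (n+1) → K,
        (∏ i' : Fin n, if i'.val + 1 < i.val + 2
            then Q ⟨i'.val + 1, by omega⟩ (z' ⟨i'.val + 1, by omega⟩) (z' ⟨i'.val, by omega⟩) else 1)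
        = Q ⟨i.val + 1, by omega⟩ (z' ⟨i.val + 1, by omega⟩) (z' ⟨i.val, by omega⟩) *
          ∏ i' : Fin n, if i'.val + 1 < i.val + 1
            then Q ⟨i'.val + 1, by omega⟩ (z' ⟨i'.val + 1, by omega⟩) (z' ⟨i'.val, by omega⟩) else 1 := by
      intro z'
      have hcond : ∀ i' : Fin n, (i'.val + 1 < i.val + 2)
          ↔ ((i'.val + 1 < i.val + 1) ∨ i' = ⟨i.val, i.isLt⟩) := by
        intro i'
        constructor
        · intro h
          rcases Nat.lt_or_ge i'.val i.val with hlt | hge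
          · exact Or.inl (by omega)
          · exact Or.inr (Fin.ext (show i'.val = i.val from by omega))
        · rintro (h | rfl)
          · omega
          · exact Nat.lt_succ_self _
      rw [Finset.prod_congr rfl (fun i' _ => if_congr (hcond i') rfl rfl)]
      exact hmm_extract (⟨i.val, i.isLt⟩ : Fin n)
        (fun i' : Fin n => i'.val + 1 < i.val + 1)
        (fun i' => Q ⟨i'.val + 1, by omega⟩ (z' ⟨i'.val + 1, by omega⟩) (z' ⟨i'.val, by omega⟩))
        (fun h => Nat.lt_irrefl _ h)
    -- main chain
    have main :
        (∑ z' : Fin (n+1) → K, if z' ⟨i.val + 1, by omega⟩ = m then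
          (q1 (z' ⟨0, by omega⟩) *
            ∏ i' : Fin n, Q ⟨i'.val + 1, by omega⟩ (z' ⟨i'.val + 1, by omega⟩) (z' ⟨i'.val, by omega⟩)) *
          (∏ i' : Fin (n+1), if i' ≤ (⟨i.val, by omega⟩ : Fin (n+1)) then f i' (x i') (z' i') else 1)
          else 0)
        = ∑ k : K, Q ⟨i.val + 1, by omega⟩ m k * α ⟨i.val, by omega⟩ k := by
      calc
        (∑ z' : Fin (n+1) → K, if z' ⟨i.val + 1, by omega⟩ = m then
            (q1 (z' ⟨0, by omega⟩) *
              ∏ i' : Fin n, Q ⟨i'.val + 1, by omega⟩ (z' ⟨i'.val + 1, by omega⟩) (z' ⟨i'.val, by omega⟩)) *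
            (∏ i' : Fin (n+1), if i' ≤ (⟨i.val, by omega⟩ : Fin (n+1)) then f i' (x i') (z' i') else 1)
            else 0)
          = ∑ z' : Fin (n+1) → K, if (∀ i' : Fin (n+1), n + 1 ≤ i'.val → z' i' = k₀) then
              (∏ i' : Fin n, if i'.val + 1 < n + 1
                then Q ⟨i'.val + 1, by omega⟩ (z' ⟨i'.val + 1, by omega⟩) (z' ⟨i'.val, by omega⟩) else 1) *
              (if z' ⟨i.val + 1, by omega⟩ = m then q1 (z' ⟨0, by omega⟩) *
                ∏ i' : Fin (n+1), if i' ≤ (⟨i.val, by omega⟩ : Fin (n+1)) then f i' (x i') (z' i') else 1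
                else 0) else 0 := by
            refine Finset.sum_congr rfl (fun z' _ => ?_)
            rw [if_pos (fun (i' : Fin (n+1)) hi' => absurd hi' (by have := i'.isLt; omega))]
            rw [Finset.prod_congr rfl (fun (i' : Fin n) _ =>
              if_pos (show i'.val + 1 < n + 1 from by have := i'.isLt; omega))]
            by_cases hz : z' ⟨i.val + 1, by omega⟩ = m
            · rw [if_pos hz, if_pos hz]; ring
            · rw [if_neg hz, if_neg hz, mul_zero]
        _ = ∑ z' : Fin (n+1) → K, if (∀ i' : Fin (n+1), i.val + 2 ≤ i'.val → z' i' = k₀) then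
              (∏ i' : Fin n, if i'.val + 1 < i.val + 2
                then Q ⟨i'.val + 1, by omega⟩ (z' ⟨i'.val + 1, by omega⟩) (z' ⟨i'.val, by omega⟩) else 1) *
              (if z' ⟨i.val + 1, by omega⟩ = m then q1 (z' ⟨0, by omega⟩) *
                ∏ i' : Fin (n+1), if i' ≤ (⟨i.val, by omega⟩ : Fin (n+1)) then f i' (x i') (z' i') else 1
                else 0) else 0 := by
            refine hmm_cut Q hQ_sum k₀
              (fun z' => if z' ⟨i.val + 1, by omega⟩ = m then q1 (z' ⟨0, by omega⟩) *
                ∏ i' : Fin (n+1), if i' ≤ (⟨i.val, by omega⟩ : Fin (n+1)) then f i' (x i') (z' i') else 1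
                else 0)
              (i.val + 2) (by omega) ?_ (n + 1) (by omega) (le_refl _)
            intro z' c a hc
            show (if Function.update z' c a ⟨i.val + 1, by omega⟩ = m
                then q1 (Function.update z' c a ⟨0, by omega⟩) *
                  ∏ i' : Fin (n+1), if i' ≤ (⟨i.val, by omega⟩ : Fin (n+1))
                    then f i' (x i') (Function.update z' c a i') else 1
                else 0)
              = (if z' ⟨i.val + 1, by omega⟩ = m
                then q1 (z' ⟨0, by omega⟩) *
                  ∏ i' : Fin (n+1), if i' ≤ (⟨i.val, by omega⟩ : Fin (n+1))
                    then f i' (x i') (z' i') else 1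
                else 0)
            rw [hupd z' c a (i.val + 1) (by omega) (by omega),
              hupd z' c a 0 (by omega) (by omega)]
            by_cases hz : z' ⟨i.val + 1, by omega⟩ = m
            · rw [if_pos hz, if_pos hz]
              congr 1
              refine Finset.prod_congr rfl (fun i' _ => ?_)
              by_cases hi' : i' ≤ (⟨i.val, by omega⟩ : Fin (n+1))
              · rw [if_pos hi', if_pos hi',
                  show (i' : Fin (n+1)) = ⟨i'.val, i'.isLt⟩ from rfl,
                  hupd z' c a i'.val i'.isLt (by have h' : i'.val ≤ i.val := hi'; omega)]
              · rw [if_neg hi', if_neg hi']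
            · rw [if_neg hz, if_neg hz]
        _ = ∑ z' : Fin (n+1) → K, if z' ⟨i.val + 1, by omega⟩ = m ∧
              (∀ i' : Fin (n+1), i.val + 2 ≤ i'.val → z' i' = k₀) then
              (∏ i' : Fin n, if i'.val + 1 < i.val + 1
                then Q ⟨i'.val + 1, by omega⟩ (z' ⟨i'.val + 1, by omega⟩) (z' ⟨i'.val, by omega⟩) else 1) *
              (Q ⟨i.val + 1, by omega⟩ m (z' ⟨i.val, by omega⟩) * (q1 (z' ⟨0, by omega⟩) *
                ∏ i' : Fin (n+1), if i' ≤ (⟨i.val, by omega⟩ : Fin (n+1)) then f i' (x i') (z' i') else 1))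
              else 0 := by
            refine Finset.sum_congr rfl (fun z' _ => ?_)
            by_cases hp : ∀ i' : Fin (n+1), i.val + 2 ≤ i'.val → z' i' = k₀
            · by_cases hz : z' ⟨i.val + 1, by omega⟩ = m
              · rw [if_pos hp, if_pos hz,
                  if_pos (show z' ⟨i.val + 1, by omega⟩ = m ∧
                    (∀ i' : Fin (n+1), i.val + 2 ≤ i'.val → z' i' = k₀) from ⟨hz, hp⟩),
                  hQ_extract z', hz]
                ring
              · rw [if_pos hp, if_neg hz,
                  if_neg (show ¬(z' ⟨i.val + 1, by omega⟩ = m ∧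
                    (∀ i' : Fin (n+1), i.val + 2 ≤ i'.val → z' i' = k₀)) from fun hand => hz hand.1),
                  mul_zero]
            · rw [if_neg hp,
                if_neg (show ¬(z' ⟨i.val + 1, by omega⟩ = m ∧
                  (∀ i' : Fin (n+1), i.val + 2 ≤ i'.val → z' i' = k₀)) from fun hand => hp hand.2)]
        _ = ∑ z' : Fin (n+1) → K, if z' ⟨i.val + 1, by omega⟩ = k₀ ∧
              (∀ i' : Fin (n+1), i.val + 2 ≤ i'.val → z' i' = k₀) then
              (∏ i' : Fin n, if i'.val + 1 < i.val + 1
                then Q ⟨i'.val + 1, by omega⟩ (z' ⟨i'.val + 1, by omega⟩) (z' ⟨i'.val, by omega⟩) else 1) *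
              (Q ⟨i.val + 1, by omega⟩ m (z' ⟨i.val, by omega⟩) * (q1 (z' ⟨0, by omega⟩) *
                ∏ i' : Fin (n+1), if i' ≤ (⟨i.val, by omega⟩ : Fin (n+1)) then f i' (x i') (z' i') else 1))
              else 0 := by
            refine hmm_swappin (⟨i.val + 1, by omega⟩ : Fin (n+1)) m k₀
              (fun z' =>
                (∏ i' : Fin n, if i'.val + 1 < i.val + 1
                  then Q ⟨i'.val + 1, by omega⟩ (z' ⟨i'.val + 1, by omega⟩) (z' ⟨i'.val, by omega⟩) else 1) *
                (Q ⟨i.val + 1, by omega⟩ m (z' ⟨i.val, by omega⟩) * (q1 (z' ⟨0, by omega⟩) *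
                  ∏ i' : Fin (n+1), if i' ≤ (⟨i.val, by omega⟩ : Fin (n+1)) then f i' (x i') (z' i') else 1)))
              ?_ (fun z' => ∀ i' : Fin (n+1), i.val + 2 ≤ i'.val → z' i' = k₀) ?_
            · intro z' a
              show (∏ i' : Fin n, if i'.val + 1 < i.val + 1 then _ else 1) * _
                  = (∏ i' : Fin n, if i'.val + 1 < i.val + 1 then _ else 1) * _
              have e1 : ∀ (r : ℕ) (hr : r < n + 1), r ≠ i.val + 1 →
                  Function.update z' (⟨i.val + 1, by omega⟩ : Fin (n+1)) a ⟨r, hr⟩ = z' ⟨r, hr⟩ :=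
                fun r hr h => hupd z' _ a r hr h
              congr 1
              · refine Finset.prod_congr rfl (fun i' _ => ?_)
                by_cases hi' : i'.val + 1 < i.val + 1
                · rw [if_pos hi', if_pos hi', e1 (i'.val + 1) (by omega) (by omega),
                    e1 i'.val (by omega) (by omega)]
                · rw [if_neg hi', if_neg hi']
              · rw [e1 i.val (by omega) (by omega), e1 0 (by omega) (by omega)]
                congr 2
                refine Finset.prod_congr rfl (fun i' _ => ?_)
                by_cases hi' : i' ≤ (⟨i.val, by omega⟩ : Fin (n+1))
                · rw [if_pos hi', if_pos hi',
                    show (i' : Fin (n+1)) = ⟨i'.val, i'.isLt⟩ from rfl,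
                    e1 i'.val i'.isLt (by have h' : i'.val ≤ i.val := hi'; omega)]
                · rw [if_neg hi', if_neg hi']
            · intro z' a
              constructor
              · intro h i' hi'
                have := h i' hi'
                rwa [show (i' : Fin (n+1)) = ⟨i'.val, i'.isLt⟩ from rfl,
                  hupd z' _ a i'.val i'.isLt (show i'.val ≠ i.val + 1 from by omega)] at this
              · intro h i' hi'
                rw [show (i' : Fin (n+1)) = ⟨i'.val, i'.isLt⟩ from rfl,
                  hupd z' _ a i'.val i'.isLt (show i'.val ≠ i.val + 1 from by omega)]
                exact h i' hi'
        _ = ∑ z' : Fin (n+1) → K, if (∀ i' : Fin (n+1), i.val + 1 ≤ i'.val → z' i' = k₀) then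
              (∏ i' : Fin n, if i'.val + 1 < i.val + 1
                then Q ⟨i'.val + 1, by omega⟩ (z' ⟨i'.val + 1, by omega⟩) (z' ⟨i'.val, by omega⟩) else 1) *
              (Q ⟨i.val + 1, by omega⟩ m (z' ⟨i.val, by omega⟩) * (q1 (z' ⟨0, by omega⟩) *
                ∏ i' : Fin (n+1), if i' ≤ (⟨i.val, by omega⟩ : Fin (n+1)) then f i' (x i') (z' i') else 1))
              else 0 := by
            refine Finset.sum_congr rfl (fun z' _ => if_congr ?_ rfl rfl)
            constructor
            · rintro ⟨h1, h2⟩ i' hi'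
              by_cases hv : i'.val = i.val + 1
              · rw [show (i' : Fin (n+1)) = ⟨i'.val, i'.isLt⟩ from rfl]
                rw [show (⟨i'.val, i'.isLt⟩ : Fin (n+1)) = ⟨i.val + 1, by omega⟩ from Fin.ext hv]
                exact h1
              · exact h2 i' (by omega)
            · intro h
              refine ⟨h ⟨i.val + 1, by omega⟩ (Nat.le_refl _), fun i' hi' => h i' (by omega)⟩
        _ = ∑ z' : Fin (n+1) → K, if (∀ i' : Fin (n+1), n + 1 ≤ i'.val → z' i' = k₀) then
              (∏ i' : Fin n, if i'.val + 1 < n + 1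
                then Q ⟨i'.val + 1, by omega⟩ (z' ⟨i'.val + 1, by omega⟩) (z' ⟨i'.val, by omega⟩) else 1) *
              (Q ⟨i.val + 1, by omega⟩ m (z' ⟨i.val, by omega⟩) * (q1 (z' ⟨0, by omega⟩) *
                ∏ i' : Fin (n+1), if i' ≤ (⟨i.val, by omega⟩ : Fin (n+1)) then f i' (x i') (z' i') else 1))
              else 0 := by
            refine (hmm_cut Q hQ_sum k₀
              (fun z' => Q ⟨i.val + 1, by omega⟩ m (z' ⟨i.val, by omega⟩) * (q1 (z' ⟨0, by omega⟩) *
                ∏ i' : Fin (n+1), if i' ≤ (⟨i.val, by omega⟩ : Fin (n+1)) then f i' (x i') (z' i') else 1))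
              (i.val + 1) (by omega) ?_ (n + 1) (by omega) (le_refl _)).symm
            intro z' c a hc
            show Q ⟨i.val + 1, by omega⟩ m (Function.update z' c a ⟨i.val, by omega⟩) *
                (q1 (Function.update z' c a ⟨0, by omega⟩) *
                  ∏ i' : Fin (n+1), if i' ≤ (⟨i.val, by omega⟩ : Fin (n+1))
                    then f i' (x i') (Function.update z' c a i') else 1)
              = Q ⟨i.val + 1, by omega⟩ m (z' ⟨i.val, by omega⟩) *
                (q1 (z' ⟨0, by omega⟩) *
                  ∏ i' : Fin (n+1), if i' ≤ (⟨i.val, by omega⟩ : Fin (n+1))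
                    then f i' (x i') (z' i') else 1)
            rw [hupd z' c a i.val (by omega) (by omega), hupd z' c a 0 (by omega) (by omega)]
            congr 2
            refine Finset.prod_congr rfl (fun i' _ => ?_)
            by_cases hi' : i' ≤ (⟨i.val, by omega⟩ : Fin (n+1))
            · rw [if_pos hi', if_pos hi',
                show (i' : Fin (n+1)) = ⟨i'.val, i'.isLt⟩ from rfl,
                hupd z' c a i'.val i'.isLt (by have h' : i'.val ≤ i.val := hi'; omega)]
            · rw [if_neg hi', if_neg hi']
        _ = ∑ z' : Fin (n+1) → K, Q ⟨i.val + 1, by omega⟩ m (z' ⟨i.val, by omega⟩) *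
              ((q1 (z' ⟨0, by omega⟩) *
                ∏ i' : Fin n, Q ⟨i'.val + 1, by omega⟩ (z' ⟨i'.val + 1, by omega⟩) (z' ⟨i'.val, by omega⟩)) *
               (∏ i' : Fin (n+1), if i' ≤ (⟨i.val, by omega⟩ : Fin (n+1)) then f i' (x i') (z' i') else 1)) := by
            refine Finset.sum_congr rfl (fun z' _ => ?_)
            rw [if_pos (fun (i' : Fin (n+1)) hi' => absurd hi' (by have := i'.isLt; omega))]
            rw [Finset.prod_congr rfl (fun (i' : Fin n) _ =>
              if_pos (show i'.val + 1 < n + 1 from by have := i'.isLt; omega))]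
            ring
        _ = ∑ k : K, Q ⟨i.val + 1, by omega⟩ m k * α ⟨i.val, by omega⟩ k := by
            symm
            calc (∑ k : K, Q ⟨i.val + 1, by omega⟩ m k * α ⟨i.val, by omega⟩ k)
                = ∑ k : K, ∑ z' : Fin (n+1) → K,
                    (if z' ⟨i.val, by omega⟩ = k then Q ⟨i.val + 1, by omega⟩ m k *
                      ((q1 (z' ⟨0, by omega⟩) *
                      ∏ i' : Fin n, Q ⟨i'.val + 1, by omega⟩ (z' ⟨i'.val + 1, by omega⟩) (z' ⟨i'.val, by omega⟩)) *
                     (∏ i' : Fin (n+1), if i' ≤ (⟨i.val, by omega⟩ : Fin (n+1)) then f i' (x i') (z' i') else 1)) else 0) := by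
                  refine Finset.sum_congr rfl (fun k _ => ?_)
                  rw [αform ⟨i.val, by omega⟩ k, Finset.mul_sum]
                  refine Finset.sum_congr rfl (fun z' _ => ?_)
                  by_cases hz : z' ⟨i.val, by omega⟩ = k
                  · rw [if_pos hz, if_pos hz]
                  · rw [if_neg hz, if_neg hz, mul_zero]
              _ = ∑ z' : Fin (n+1) → K, ∑ k : K,
                    (if z' ⟨i.val, by omega⟩ = k then Q ⟨i.val + 1, by omega⟩ m k *
                      ((q1 (z' ⟨0, by omega⟩) *
                      ∏ i' : Fin n, Q ⟨i'.val + 1, by omega⟩ (z' ⟨i'.val + 1, by omega⟩) (z' ⟨i'.val, by omega⟩)) *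
                     (∏ i' : Fin (n+1), if i' ≤ (⟨i.val, by omega⟩ : Fin (n+1)) then f i' (x i') (z' i') else 1)) else 0) := Finset.sum_comm
              _ = ∑ z' : Fin (n+1) → K, Q ⟨i.val + 1, by omega⟩ m (z' ⟨i.val, by omega⟩) *
                      ((q1 (z' ⟨0, by omega⟩) *
                      ∏ i' : Fin n, Q ⟨i'.val + 1, by omega⟩ (z' ⟨i'.val + 1, by omega⟩) (z' ⟨i'.val, by omega⟩)) *
                     (∏ i' : Fin (n+1), if i' ≤ (⟨i.val, by omega⟩ : Fin (n+1)) then f i' (x i') (z' i') else 1)) := by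
                  refine Finset.sum_congr rfl (fun z' _ => ?_)
                  rw [Finset.sum_ite_eq Finset.univ (z' ⟨i.val, by omega⟩)
                    (fun k => Q ⟨i.val + 1, by omega⟩ m k *
                      ((q1 (z' ⟨0, by omega⟩) *
                      ∏ i' : Fin n, Q ⟨i'.val + 1, by omega⟩ (z' ⟨i'.val + 1, by omega⟩) (z' ⟨i'.val, by omega⟩)) *
                     (∏ i' : Fin (n+1), if i' ≤ (⟨i.val, by omega⟩ : Fin (n+1)) then f i' (x i') (z' i') else 1))), if_pos (Finset.mem_univ _)]
    -- assemble
    calc α ⟨i.val + 1, by omega⟩ m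
        = ∑ z' : Fin (n+1) → K, if z' ⟨i.val + 1, by omega⟩ = m then
            f ⟨i.val + 1, by omega⟩ (x ⟨i.val + 1, by omega⟩) m *
            ((q1 (z' ⟨0, by omega⟩) *
              ∏ i' : Fin n, Q ⟨i'.val + 1, by omega⟩ (z' ⟨i'.val + 1, by omega⟩) (z' ⟨i'.val, by omega⟩)) *
             (∏ i' : Fin (n+1), if i' ≤ (⟨i.val, by omega⟩ : Fin (n+1)) then f i' (x i') (z' i') else 1))
            else 0 := by
          rw [αform ⟨i.val + 1, by omega⟩ m]
          refine Finset.sum_congr rfl (fun z' _ => ?_)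
          by_cases hz : z' ⟨i.val + 1, by omega⟩ = m
          · rw [if_pos hz, if_pos hz, hf_extract z', hz]
            ring
          · rw [if_neg hz, if_neg hz]
      _ = f ⟨i.val + 1, by omega⟩ (x ⟨i.val + 1, by omega⟩) m *
          ∑ z' : Fin (n+1) → K, if z' ⟨i.val + 1, by omega⟩ = m then
            (q1 (z' ⟨0, by omega⟩) *
              ∏ i' : Fin n, Q ⟨i'.val + 1, by omega⟩ (z' ⟨i'.val + 1, by omega⟩) (z' ⟨i'.val, by omega⟩)) *
            (∏ i' : Fin (n+1), if i' ≤ (⟨i.val, by omega⟩ : Fin (n+1)) then f i' (x i') (z' i') else 1)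
            else 0 := by
          rw [Finset.mul_sum]
          refine Finset.sum_congr rfl (fun z' _ => ?_)
          by_cases hz : z' ⟨i.val + 1, by omega⟩ = m
          · rw [if_pos hz, if_pos hz]
          · rw [if_neg hz, if_neg hz, mul_zero]
      _ = f ⟨i.val + 1, by omega⟩ (x ⟨i.val + 1, by omega⟩) m *
          ∑ k : K, Q ⟨i.val + 1, by omega⟩ m k * α ⟨i.val, by omega⟩ k := by
          rw [main]

  -- final algebra
  set S : ℝ := ∑ z' : Fin (n+1) → K, μ z' x with hS
  set D : Fin n → ℝ := fun i =>
    ∑ k : K, Q ⟨i.val + 1, by omega⟩ (z ⟨i.val + 1, by omega⟩) k * α ⟨i.val, by omega⟩ k with hD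
  rw [F1]
  by_cases hDz : ∀ i : Fin n, D i ≠ 0
  · -- all denominators nonzero
    have hSne : S ≠ 0 := ne_of_gt hx
    have key : μ z x * ∏ i : Fin n, D i
        = α ⟨n, by omega⟩ (z ⟨n, by omega⟩) *
          ∏ i : Fin n, (Q ⟨i.val + 1, by omega⟩ (z ⟨i.val + 1, by omega⟩) (z ⟨i.val, by omega⟩) *
            α ⟨i.val, by omega⟩ (z ⟨i.val, by omega⟩)) := by
      simp only [hD]
      have h1 : (∏ jj : Fin (n+1), α jj (z jj))
          = α ⟨0, by omega⟩ (z ⟨0, by omega⟩) *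
            ∏ i : Fin n, α ⟨i.val + 1, by omega⟩ (z ⟨i.val + 1, by omega⟩) := by
        rw [Fin.prod_univ_succ]
        congr 1
      have h2 : (∏ jj : Fin (n+1), α jj (z jj))
          = (∏ i : Fin n, α ⟨i.val, by omega⟩ (z ⟨i.val, by omega⟩)) *
            α ⟨n, by omega⟩ (z ⟨n, by omega⟩) := by
        rw [Fin.prod_univ_castSucc]
        rfl
      have tele := h1.symm.trans h2
      have hf_split : (∏ j : Fin (n+1), f j (x j) (z j))
          = f ⟨0, by omega⟩ (x ⟨0, by omega⟩) (z ⟨0, by omega⟩) *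
            ∏ i : Fin n, f ⟨i.val + 1, by omega⟩ (x ⟨i.val + 1, by omega⟩) (z ⟨i.val + 1, by omega⟩) := by
        rw [Fin.prod_univ_succ]
        congr 1
      symm
      calc α ⟨n, by omega⟩ (z ⟨n, by omega⟩) *
            ∏ i : Fin n, (Q ⟨i.val + 1, by omega⟩ (z ⟨i.val + 1, by omega⟩) (z ⟨i.val, by omega⟩) *
              α ⟨i.val, by omega⟩ (z ⟨i.val, by omega⟩))
          = (∏ i : Fin n, Q ⟨i.val + 1, by omega⟩ (z ⟨i.val + 1, by omega⟩) (z ⟨i.val, by omega⟩)) *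
            ((∏ i : Fin n, α ⟨i.val, by omega⟩ (z ⟨i.val, by omega⟩)) *
              α ⟨n, by omega⟩ (z ⟨n, by omega⟩)) := by
            rw [Finset.prod_mul_distrib]; ring
        _ = (∏ i : Fin n, Q ⟨i.val + 1, by omega⟩ (z ⟨i.val + 1, by omega⟩) (z ⟨i.val, by omega⟩)) *
            (α ⟨0, by omega⟩ (z ⟨0, by omega⟩) *
              ∏ i : Fin n, α ⟨i.val + 1, by omega⟩ (z ⟨i.val + 1, by omega⟩)) := by
            rw [← tele]
        _ = (∏ i : Fin n, Q ⟨i.val + 1, by omega⟩ (z ⟨i.val + 1, by omega⟩) (z ⟨i.val, by omega⟩)) *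
            ((q1 (z ⟨0, by omega⟩) * f ⟨0, by omega⟩ (x ⟨0, by omega⟩) (z ⟨0, by omega⟩)) *
              ∏ i : Fin n,
                (f ⟨i.val + 1, by omega⟩ (x ⟨i.val + 1, by omega⟩) (z ⟨i.val + 1, by omega⟩) *
                  ∑ k : K, Q ⟨i.val + 1, by omega⟩ (z ⟨i.val + 1, by omega⟩) k *
                    α ⟨i.val, by omega⟩ k)) := by
            rw [F0, Finset.prod_congr rfl (fun i _ => F2 i)]
        _ = μ z x * ∏ i : Fin n,
              ∑ k : K, Q ⟨i.val + 1, by omega⟩ (z ⟨i.val + 1, by omega⟩) k *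
                α ⟨i.val, by omega⟩ k := by
            rw [hμ' z x, hf_split, Finset.prod_mul_distrib]
            ring
    have hDprod : (∏ i : Fin n, D i) ≠ 0 := Finset.prod_ne_zero_iff.mpr fun i _ => hDz i
    calc μ z x / S = (μ z x * ∏ i : Fin n, D i) / (S * ∏ i : Fin n, D i) := by
          rw [mul_div_mul_right _ _ hDprod]
      _ = (α ⟨n, by omega⟩ (z ⟨n, by omega⟩) *
            ∏ i : Fin n, (Q ⟨i.val + 1, by omega⟩ (z ⟨i.val + 1, by omega⟩) (z ⟨i.val, by omega⟩) *
              α ⟨i.val, by omega⟩ (z ⟨i.val, by omega⟩))) / (S * ∏ i : Fin n, D i) := by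
          rw [key]
      _ = (α ⟨n, by omega⟩ (z ⟨n, by omega⟩) / S) *
            ((∏ i : Fin n, (Q ⟨i.val + 1, by omega⟩ (z ⟨i.val + 1, by omega⟩) (z ⟨i.val, by omega⟩) *
              α ⟨i.val, by omega⟩ (z ⟨i.val, by omega⟩))) / ∏ i : Fin n, D i) := by
          rw [div_mul_div_comm]
      _ = _ := by
          rw [← Finset.prod_div_distrib]
  · -- some denominator vanishes
    push_neg at hDz
    obtain ⟨i₀, hD0⟩ := hDz
    have hterm : Q ⟨i₀.val + 1, by omega⟩ (z ⟨i₀.val + 1, by omega⟩) (z ⟨i₀.val, by omega⟩) *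
        α ⟨i₀.val, by omega⟩ (z ⟨i₀.val, by omega⟩) = 0 := by
      have hnn : ∀ k ∈ (Finset.univ : Finset K),
          0 ≤ Q ⟨i₀.val + 1, by omega⟩ (z ⟨i₀.val + 1, by omega⟩) k * α ⟨i₀.val, by omega⟩ k :=
        fun k _ => mul_nonneg (hQ_nonneg _ _ _) (hα_nonneg _ _)
      exact (Finset.sum_eq_zero_iff_of_nonneg hnn).mp hD0 (z ⟨i₀.val, by omega⟩) (Finset.mem_univ _)
    have hμ0 : μ z x = 0 := by
      rcases mul_eq_zero.mp hterm with hQ0 | hα0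
      · rw [hμ']
        rw [Finset.prod_eq_zero (Finset.mem_univ i₀) hQ0]
        ring
      · have hle : μ z x ≤ α ⟨i₀.val, by omega⟩ (z ⟨i₀.val, by omega⟩) := by
          have nonneg_ite : ∀ (z' : Fin (n+1) → K) (x' : Fin (n+1) → 𝒳),
              0 ≤ (if z' ⟨i₀.val, by omega⟩ = z ⟨i₀.val, by omega⟩ ∧
                (∀ i : Fin (n+1), i ≤ ⟨i₀.val, by omega⟩ → x' i = x i) then μ z' x' else 0) := by
            intro z' x'
            by_cases h : z' ⟨i₀.val, by omega⟩ = z ⟨i₀.val, by omega⟩ ∧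
                (∀ i : Fin (n+1), i ≤ ⟨i₀.val, by omega⟩ → x' i = x i)
            · rw [if_pos h]; exact hμ_nonneg _ _
            · rw [if_neg h]
          have hs1 : ∀ (g : (Fin (n+1) → 𝒳) → ℝ), (∀ y, 0 ≤ g y) → ∀ y₀, g y₀ ≤ ∑ y, g y :=
            fun g hg y₀ => Finset.single_le_sum (fun y _ => hg y) (Finset.mem_univ y₀)
          have hs2 : ∀ (g : (Fin (n+1) → K) → ℝ), (∀ y, 0 ≤ g y) → ∀ y₀, g y₀ ≤ ∑ y, g y :=
            fun g hg y₀ => Finset.single_le_sum (fun y _ => hg y) (Finset.mem_univ y₀)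
          rw [hα]
          have h1 := hs1 (fun x' => if z ⟨i₀.val, by omega⟩ = z ⟨i₀.val, by omega⟩ ∧
                (∀ i : Fin (n+1), i ≤ ⟨i₀.val, by omega⟩ → x' i = x i) then μ z x' else 0)
            (fun y => nonneg_ite z y) x
          have h2 := hs2 (fun z' => ∑ x' : Fin (n+1) → 𝒳,
              if z' ⟨i₀.val, by omega⟩ = z ⟨i₀.val, by omega⟩ ∧
                (∀ i : Fin (n+1), i ≤ ⟨i₀.val, by omega⟩ → x' i = x i) then μ z' x' else 0)
            (fun y => Finset.sum_nonneg fun x' _ => nonneg_ite y x') z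
          refine le_trans (le_trans (le_of_eq ?_) h1) h2
          show μ z x = (fun x' => if z ⟨i₀.val, by omega⟩ = z ⟨i₀.val, by omega⟩ ∧
                (∀ i : Fin (n+1), i ≤ ⟨i₀.val, by omega⟩ → x' i = x i) then μ z x' else 0) x
          simp
        linarith [hμ_nonneg z x]
    rw [hμ0, zero_div]
    rw [Finset.prod_eq_zero (Finset.mem_univ i₀)
      (by rw [show (∑ k : K, Q ⟨i₀.val + 1, by omega⟩ (z ⟨i₀.val + 1, by omega⟩) k *
          α ⟨i₀.val, by omega⟩ k) = (0:ℝ) from hD0]; exact div_zero _)]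
    ring
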